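/- For countable partitions B and C with finite second information moments, the conditional standard deviation satisfies σ(C|B) ≤ √K_2(C), i.e. Σ_{B,C} μ(B∩C)(log(μ(B)/μ(B∩C)) − H(C|B))² ≤ Σ_C μ(C) log² μ(C). -/

import Mathlib

open MeasureTheory

def IsCountablePartition {Ω : Type*} [MeasurableSpace Ω] (μ : Measure Ω)
    (B : ℕ → Set Ω) : Prop :=
  (∀ i, MeasurableSet (B i)) ∧ Pairwise (Function.onFun Disjoint B) ∧ μ (⋃ i, B i) = μ Set.univ

noncomputable section

variable {Ω : Type*} [MeasurableSpace Ω]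

/-- Conditional entropy `H(C|B) = Σ_{B,C} −μ(B∩C) log(μ(B∩C)/μ(B))`. -/
def condEntropy' (μ : Measure Ω) (B C : ℕ → Set Ω) : ℝ :=
  ∑' p : ℕ × ℕ, -((μ (B p.1 ∩ C p.2)).toReal *
    Real.log ((μ (B p.1 ∩ C p.2)).toReal / (μ (B p.1)).toReal))

/-- `exp w * (w² - 2aw + 2a) ≤ 2a` for `w ≤ a`, `2 ≤ a`. -/
private lemma tangent_ineq {a w : ℝ} (ha : 2 ≤ a) (hw : w ≤ a) :
    Real.exp w * (w ^ 2 - 2 * a * w + 2 * a) ≤ 2 * a := by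
  set g : ℝ → ℝ := fun x => Real.exp x * (x ^ 2 - 2 * a * x + 2 * a) with hg
  have hderiv : ∀ x : ℝ, HasDerivAt g (Real.exp x * (x ^ 2 + (2 - 2 * a) * x)) x := by
    intro x
    have h1 : HasDerivAt (fun x : ℝ => x ^ 2 - 2 * a * x + 2 * a) (2 * x - 2 * a) x := by
      have := ((hasDerivAt_pow 2 x).sub ((hasDerivAt_id x).const_mul (2 * a))).add_const (2 * a)
      simpa using this
    have h2 : HasDerivAt g (Real.exp x * (x ^ 2 - 2 * a * x + 2 * a) + Real.exp x * (2 * x - 2 * a)) x :=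
      (Real.hasDerivAt_exp x).mul h1
    convert h2 using 1
    ring
  have hdiff : Differentiable ℝ g := fun x => (hderiv x).differentiableAt
  have hderiv' : ∀ x, deriv g x = Real.exp x * (x ^ 2 + (2 - 2 * a) * x) :=
    fun x => (hderiv x).deriv
  have h0 : g 0 = 2 * a := by simp [hg]
  have hgoal : g w ≤ 2 * a := by
    rcases le_total w 0 with hw0 | hw0
    · have hmono : MonotoneOn g (Set.Iic 0) := by
        apply monotoneOn_of_deriv_nonneg (convex_Iic 0) hdiff.continuous.continuousOn
          hdiff.differentiableOn
        intro x hx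
        rw [interior_Iic] at hx
        rw [hderiv']
        have hx0 : x < 0 := hx
        have hfac : 0 ≤ x ^ 2 + (2 - 2 * a) * x := by nlinarith
        exact mul_nonneg (Real.exp_pos x).le hfac
      have := hmono (Set.mem_Iic.mpr hw0) (Set.mem_Iic.mpr le_rfl) hw0
      rw [h0] at this
      exact this
    · have hanti : AntitoneOn g (Set.Icc 0 a) := by
        apply antitoneOn_of_deriv_nonpos (convex_Icc 0 a) hdiff.continuous.continuousOn
          hdiff.differentiableOn
        intro x hx
        rw [interior_Icc] at hx
        rw [hderiv']
        have hx0 : 0 < x := hx.1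
        have hxa : x < a := hx.2
        have hfac : x ^ 2 + (2 - 2 * a) * x ≤ 0 := by nlinarith
        exact mul_nonpos_of_nonneg_of_nonpos (Real.exp_pos x).le hfac
      have h0a : (0 : ℝ) ∈ Set.Icc (0 : ℝ) a := ⟨le_rfl, by linarith⟩
      have hwa : w ∈ Set.Icc (0 : ℝ) a := ⟨hw0, hw⟩
      have := hanti h0a hwa hw0
      rw [h0] at this
      exact this
  exact hgoal

/-- Tangent-line bound: for `0 ≤ p ≤ b`, `0 < c` with `log c ≤ -2`,
`p log²(b/p) ≤ (log²c + 2 log c) p + b (-2 c log c)`. -/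
private lemma key_ineq {p b c : ℝ} (hp : 0 ≤ p) (hpb : p ≤ b) (hc : 0 < c)
    (hlc : Real.log c ≤ -2) :
    p * Real.log (b / p) ^ 2 ≤
      (Real.log c ^ 2 + 2 * Real.log c) * p + b * (-2 * c * Real.log c) := by
  rcases eq_or_lt_of_le hp with hp0 | hp0
  · have hb : 0 ≤ b := le_trans hp hpb
    have h1 : 0 ≤ b * (-2 * c * Real.log c) := by
      apply mul_nonneg hb
      nlinarith
    rw [← hp0]
    simpa using h1
  · have hb : 0 < b := lt_of_lt_of_le hp0 hpb
    set a : ℝ := -Real.log c with ha_def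
    have ha : 2 ≤ a := by rw [ha_def]; linarith
    have hlc' : Real.log c = -a := by rw [ha_def]; ring
    set u : ℝ := Real.log p - Real.log b with hu
    have hu0 : u ≤ 0 := by
      have := Real.log_le_log hp0 hpb
      rw [hu]; linarith
    have hw : u + a ≤ a := by linarith
    have htan := tangent_ineq ha hw
    have hexp : Real.exp (u + a) = p / (b * c) := by
      rw [Real.exp_add, hu, ha_def, Real.exp_sub, Real.exp_neg, Real.exp_log hp0,
        Real.exp_log hb, Real.exp_log hc]
      field_simp
    have hQ : (u + a) ^ 2 - 2 * a * (u + a) + 2 * a = u ^ 2 - a ^ 2 + 2 * a := by ring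
    rw [hexp, hQ] at htan
    have hbc : 0 < b * c := mul_pos hb hc
    have h3 : p * (u ^ 2 - a ^ 2 + 2 * a) ≤ 2 * a * (b * c) := by
      rw [div_mul_eq_mul_div, div_le_iff₀ hbc] at htan
      linarith
    have hlog : Real.log (b / p) = -u := by
      rw [Real.log_div hb.ne' hp0.ne', hu]; ring
    rw [hlog, hlc']
    nlinarith [h3]

set_option maxHeartbeats 2000000 in
/-- Abstract core of the theorem. -/
private lemma main_aux (P : ℕ × ℕ → ℝ) (b c : ℕ → ℝ)
    (hPnn : ∀ q, 0 ≤ P q) (hPb : ∀ q, P q ≤ b q.1) (hPc : ∀ q, P q ≤ c q.2)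
    (hbnn : ∀ i, 0 ≤ b i)
    (hclog : ∀ j, 0 < c j → Real.log (c j) ≤ -2)
    (hbs : Summable b) (hbsum : ∑' i, b i = 1)
    (hPs : Summable P) (hPsum : ∑' q, P q = 1)
    (hProw : ∀ j, Summable fun i => P (i, j))
    (hProwsum : ∀ j, ∑' i, P (i, j) = c j)
    (hK2 : Summable fun j => c j * Real.log (c j) ^ 2)
    (h : ℝ) (hh : h = ∑' q, -(P q * Real.log (P q / b q.1))) :
    ∑' q : ℕ × ℕ, P q * (Real.log (b q.1 / P q) - h) ^ 2
      ≤ ∑' j, c j * Real.log (c j) ^ 2 := by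
  have hcnn : ∀ j, 0 ≤ c j := fun j => le_trans (hPnn (0, j)) (hPc (0, j))
  -- summability of c * log c
  have hcLabs : ∀ j, |c j * Real.log (c j)| ≤ c j * Real.log (c j) ^ 2 := by
    intro j
    rcases (hcnn j).eq_or_lt with h0 | h0
    · rw [← h0]; simp
    · have hl := hclog j h0
      rw [abs_mul, abs_of_pos h0, abs_of_nonpos (by linarith)]
      have : -Real.log (c j) ≤ Real.log (c j) ^ 2 := by nlinarith
      nlinarith
  have hcL : Summable fun j => c j * Real.log (c j) :=
    Summable.of_abs (Summable.of_nonneg_of_le (fun j => abs_nonneg _) hcLabs hK2)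
  have hDs : Summable fun j => -2 * c j * Real.log (c j) :=
    Summable.congr (hcL.mul_left (-2)) (fun j => by ring)
  have hDnn : ∀ j, 0 ≤ -2 * c j * Real.log (c j) := by
    intro j
    rcases (hcnn j).eq_or_lt with h0 | h0
    · rw [← h0]; ring_nf; simp
    · have := hclog j h0
      nlinarith
  have hAnn : ∀ j, 0 ≤ Real.log (c j) ^ 2 + 2 * Real.log (c j) := by
    intro j
    rcases (hcnn j).eq_or_lt with h0 | h0
    · rw [← h0]; simp
    · have := hclog j h0
      nlinarith
  have hAc : Summable fun j => (Real.log (c j) ^ 2 + 2 * Real.log (c j)) * c j :=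
    Summable.congr (hK2.add (hcL.mul_left 2)) (fun j => by ring)
  -- part 1 : Σ_q A_{q.2} P q
  have hf1 : Summable (fun q : ℕ × ℕ =>
      (Real.log (c q.1) ^ 2 + 2 * Real.log (c q.1)) * P (q.2, q.1)) := by
    rw [summable_prod_of_nonneg (fun q => mul_nonneg (hAnn _) (hPnn _))]
    constructor
    · intro j
      exact Summable.congr ((hProw j).mul_left
        (Real.log (c j) ^ 2 + 2 * Real.log (c j))) (fun i => rfl)
    · apply Summable.congr hAc
      intro j
      calc (Real.log (c j) ^ 2 + 2 * Real.log (c j)) * c j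
          = (Real.log (c j) ^ 2 + 2 * Real.log (c j)) * ∑' i, P (i, j) := by rw [hProwsum j]
        _ = ∑' i, (Real.log (c j) ^ 2 + 2 * Real.log (c j)) * P (i, j) := tsum_mul_left.symm
        _ = ∑' i, (Real.log (c (j, i).1) ^ 2 + 2 * Real.log (c (j, i).1))
              * P ((j, i).2, (j, i).1) := tsum_congr (fun i => rfl)
  have hS1 : Summable (fun q : ℕ × ℕ =>
      (Real.log (c q.2) ^ 2 + 2 * Real.log (c q.2)) * P q) := by
    have := (Equiv.prodComm ℕ ℕ).summable_iff.mpr hf1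
    exact Summable.congr this (fun q => rfl)
  have hT1 : ∑' q : ℕ × ℕ, (Real.log (c q.2) ^ 2 + 2 * Real.log (c q.2)) * P q
      = ∑' j, (Real.log (c j) ^ 2 + 2 * Real.log (c j)) * c j := by
    have e1 : ∑' q : ℕ × ℕ, (Real.log (c q.2) ^ 2 + 2 * Real.log (c q.2)) * P q
        = ∑' q : ℕ × ℕ, (Real.log (c q.1) ^ 2 + 2 * Real.log (c q.1)) * P (q.2, q.1) := by
      rw [← (Equiv.prodComm ℕ ℕ).tsum_eq
        (fun q : ℕ × ℕ => (Real.log (c q.1) ^ 2 + 2 * Real.log (c q.1)) * P (q.2, q.1))]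
      exact tsum_congr (fun q => rfl)
    rw [e1, Summable.tsum_prod hf1]
    apply tsum_congr
    intro j
    calc ∑' i, (Real.log (c (j, i).1) ^ 2 + 2 * Real.log (c (j, i).1))
            * P ((j, i).2, (j, i).1)
        = ∑' i, (Real.log (c j) ^ 2 + 2 * Real.log (c j)) * P (i, j) :=
          tsum_congr (fun i => rfl)
      _ = (Real.log (c j) ^ 2 + 2 * Real.log (c j)) * ∑' i, P (i, j) := tsum_mul_left
      _ = (Real.log (c j) ^ 2 + 2 * Real.log (c j)) * c j := by rw [hProwsum j]
  -- part 2 : Σ_q b_{q.1} D_{q.2}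
  have hS2 : Summable (fun q : ℕ × ℕ => b q.1 * (-2 * c q.2 * Real.log (c q.2))) :=
    Summable.mul_of_nonneg hbs hDs (fun i => hbnn i) (fun j => hDnn j)
  have hT2 : ∑' q : ℕ × ℕ, b q.1 * (-2 * c q.2 * Real.log (c q.2))
      = ∑' j, -2 * c j * Real.log (c j) := by
    rw [Summable.tsum_prod hS2]
    have e2 : ∀ i, ∑' j, b i * (-2 * c j * Real.log (c j))
        = b i * ∑' j, -2 * c j * Real.log (c j) := fun i => tsum_mul_left
    rw [tsum_congr e2, tsum_mul_right, hbsum, one_mul]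
  -- the bound F ≤ G
  have hFG : ∀ q : ℕ × ℕ, P q * Real.log (b q.1 / P q) ^ 2 ≤
      (Real.log (c q.2) ^ 2 + 2 * Real.log (c q.2)) * P q
        + b q.1 * (-2 * c q.2 * Real.log (c q.2)) := by
    intro q
    rcases (hcnn q.2).eq_or_lt with h0 | h0
    · have hP0 : P q = 0 := le_antisymm (by rw [h0]; exact hPc q) (hPnn q)
      rw [hP0, ← h0]
      simp
    · exact key_ineq (hPnn q) (hPb q) h0 (hclog _ h0)
  have hGs : Summable (fun q : ℕ × ℕ =>
      (Real.log (c q.2) ^ 2 + 2 * Real.log (c q.2)) * P q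
        + b q.1 * (-2 * c q.2 * Real.log (c q.2))) := hS1.add hS2
  have hFnn : ∀ q : ℕ × ℕ, 0 ≤ P q * Real.log (b q.1 / P q) ^ 2 :=
    fun q => mul_nonneg (hPnn q) (sq_nonneg _)
  have hFs : Summable (fun q : ℕ × ℕ => P q * Real.log (b q.1 / P q) ^ 2) :=
    Summable.of_nonneg_of_le hFnn hFG hGs
  -- Σ F ≤ Σ_j c log² c
  have hFle : ∑' q : ℕ × ℕ, P q * Real.log (b q.1 / P q) ^ 2
      ≤ ∑' j, c j * Real.log (c j) ^ 2 := by
    have h1 := Summable.tsum_le_tsum hFG hFs hGs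
    rw [Summable.tsum_add hS1 hS2, hT1, hT2] at h1
    have h2 : ∑' j, (Real.log (c j) ^ 2 + 2 * Real.log (c j)) * c j
        = (∑' j, c j * Real.log (c j) ^ 2) + 2 * ∑' j, c j * Real.log (c j) := by
      rw [← tsum_mul_left, ← Summable.tsum_add hK2 (hcL.mul_left 2)]
      exact tsum_congr (fun j => by ring)
    have h3 : ∑' j, -2 * c j * Real.log (c j) = -2 * ∑' j, c j * Real.log (c j) := by
      rw [← tsum_mul_left]
      exact tsum_congr (fun j => by ring)
    rw [h2, h3] at h1
    linarith
  -- entropy as a sum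
  have hX : h = ∑' q : ℕ × ℕ, P q * Real.log (b q.1 / P q) := by
    rw [hh]
    apply tsum_congr
    intro q
    rcases (hPnn q).eq_or_lt with h0 | h0
    · rw [← h0]; simp
    · have hbq : 0 < b q.1 := lt_of_lt_of_le h0 (hPb q)
      rw [Real.log_div h0.ne' hbq.ne', Real.log_div hbq.ne' h0.ne']
      ring
  have hXabs : ∀ q : ℕ × ℕ, |P q * Real.log (b q.1 / P q)| ≤
      P q + P q * Real.log (b q.1 / P q) ^ 2 := by
    intro q
    rw [abs_mul, abs_of_nonneg (hPnn q)]
    have h1 : |Real.log (b q.1 / P q)| ≤ 1 + Real.log (b q.1 / P q) ^ 2 := by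
      nlinarith [sq_abs (Real.log (b q.1 / P q)), abs_nonneg (Real.log (b q.1 / P q)),
        sq_nonneg (|Real.log (b q.1 / P q)| - 1)]
    nlinarith [hPnn q]
  have hG's : Summable (fun q : ℕ × ℕ => P q * Real.log (b q.1 / P q)) :=
    Summable.of_abs (Summable.of_nonneg_of_le (fun q => abs_nonneg _) hXabs (hPs.add hFs))
  have hHs : ∑' q : ℕ × ℕ, P q * Real.log (b q.1 / P q) = h := hX.symm
  -- variance expansion
  have hexpand : ∀ q : ℕ × ℕ, P q * (Real.log (b q.1 / P q) - h) ^ 2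
      = P q * Real.log (b q.1 / P q) ^ 2
        + (h ^ 2 * P q - 2 * h * (P q * Real.log (b q.1 / P q))) := fun q => by ring
  calc ∑' q : ℕ × ℕ, P q * (Real.log (b q.1 / P q) - h) ^ 2
      = ∑' q : ℕ × ℕ, (P q * Real.log (b q.1 / P q) ^ 2
        + (h ^ 2 * P q - 2 * h * (P q * Real.log (b q.1 / P q)))) := tsum_congr hexpand
    _ = (∑' q : ℕ × ℕ, P q * Real.log (b q.1 / P q) ^ 2)
        + ((∑' q : ℕ × ℕ, h ^ 2 * P q) - ∑' q : ℕ × ℕ, 2 * h * (P q * Real.log (b q.1 / P q))) := by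
        rw [Summable.tsum_add hFs ((hPs.mul_left (h ^ 2)).sub (hG's.mul_left (2 * h))),
          Summable.tsum_sub (hPs.mul_left (h ^ 2)) (hG's.mul_left (2 * h))]
    _ = (∑' q : ℕ × ℕ, P q * Real.log (b q.1 / P q) ^ 2) + (h ^ 2 * 1 - 2 * h * h) := by
        rw [tsum_mul_left, tsum_mul_left, hPsum, hHs]
    _ ≤ ∑' j, c j * Real.log (c j) ^ 2 := by nlinarith [hFle, sq_nonneg h]

theorem cond_var_le_K2 (μ : Measure Ω) [IsProbabilityMeasure μ]
    (B C : ℕ → Set Ω)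
    (hB : IsCountablePartition μ B) (hC : IsCountablePartition μ C)
    (hBsmall : ∀ i, μ (B i) ≤ ENNReal.ofReal (Real.exp (-2 : ℝ)))
    (hCsmall : ∀ i, μ (C i) ≤ ENNReal.ofReal (Real.exp (-2 : ℝ)))
    (hK2B : Summable fun i => (μ (B i)).toReal * (Real.log (μ (B i)).toReal) ^ 2)
    (hK2C : Summable fun i => (μ (C i)).toReal * (Real.log (μ (C i)).toReal) ^ 2) :
    (∑' p : ℕ × ℕ, (μ (B p.1 ∩ C p.2)).toReal *
        (Real.log ((μ (B p.1)).toReal / (μ (B p.1 ∩ C p.2)).toReal)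
          - condEntropy' μ B C) ^ 2)
      ≤ ∑' j, (μ (C j)).toReal * (Real.log (μ (C j)).toReal) ^ 2 := by
  obtain ⟨hBm, hBd, hBu⟩ := hB
  obtain ⟨hCm, hCd, hCu⟩ := hC
  have hBU : μ (⋃ i, B i) = 1 := by rw [hBu]; exact measure_univ
  have hCU : μ (⋃ j, C j) = 1 := by rw [hCu]; exact measure_univ
  have hBc : μ ((⋃ i, B i)ᶜ) = 0 := by
    rw [measure_compl (MeasurableSet.iUnion hBm) (measure_ne_top μ _), hBU, measure_univ]
    simp
  have hCc : μ ((⋃ j, C j)ᶜ) = 0 := by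
    rw [measure_compl (MeasurableSet.iUnion hCm) (measure_ne_top μ _), hCU, measure_univ]
    simp
  have hBrow : ∀ i, ∑' j, μ (B i ∩ C j) = μ (B i) := by
    intro i
    rw [← measure_iUnion
      (fun j k hjk => Disjoint.mono Set.inter_subset_right Set.inter_subset_right (hCd hjk))
      (fun j => (hBm i).inter (hCm j)), ← Set.inter_iUnion]
    exact measure_inter_conull hCc
  have hCrow : ∀ j, ∑' i, μ (B i ∩ C j) = μ (C j) := by
    intro j
    rw [← measure_iUnion
      (fun i k hik => Disjoint.mono Set.inter_subset_left Set.inter_subset_left (hBd hik))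
      (fun i => (hBm i).inter (hCm j)), ← Set.iUnion_inter, Set.inter_comm]
    exact measure_inter_conull hBc
  have hbtot : ∑' i, μ (B i) = 1 := by rw [← measure_iUnion hBd hBm]; exact hBU
  have hPtot : ∑' q : ℕ × ℕ, μ (B q.1 ∩ C q.2) = 1 := by
    rw [ENNReal.tsum_prod']
    calc ∑' i, ∑' j, μ (B i ∩ C j) = ∑' i, μ (B i) := tsum_congr hBrow
      _ = 1 := hbtot
  apply main_aux (fun q : ℕ × ℕ => (μ (B q.1 ∩ C q.2)).toReal)
    (fun i => (μ (B i)).toReal) (fun j => (μ (C j)).toReal)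
  · intro q; exact ENNReal.toReal_nonneg
  · intro q
    exact ENNReal.toReal_mono (measure_ne_top μ _) (measure_mono Set.inter_subset_left)
  · intro q
    exact ENNReal.toReal_mono (measure_ne_top μ _) (measure_mono Set.inter_subset_right)
  · intro i; exact ENNReal.toReal_nonneg
  · intro j hj
    have h1 : (μ (C j)).toReal ≤ Real.exp (-2 : ℝ) := by
      calc (μ (C j)).toReal ≤ (ENNReal.ofReal (Real.exp (-2 : ℝ))).toReal :=
            ENNReal.toReal_mono ENNReal.ofReal_ne_top (hCsmall j)
        _ = Real.exp (-2 : ℝ) := ENNReal.toReal_ofReal (Real.exp_pos _).le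
    calc Real.log (μ (C j)).toReal ≤ Real.log (Real.exp (-2 : ℝ)) := Real.log_le_log hj h1
      _ = -2 := Real.log_exp _
  · exact ENNReal.summable_toReal (by rw [hbtot]; exact ENNReal.one_ne_top)
  · rw [← ENNReal.tsum_toReal_eq (fun i => measure_ne_top μ _), hbtot, ENNReal.toReal_one]
  · exact ENNReal.summable_toReal (by rw [hPtot]; exact ENNReal.one_ne_top)
  · rw [← ENNReal.tsum_toReal_eq (fun q => measure_ne_top μ _), hPtot, ENNReal.toReal_one]
  · intro j
    exact ENNReal.summable_toReal (by rw [hCrow j]; exact measure_ne_top μ _)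
  · intro j
    rw [← ENNReal.tsum_toReal_eq (fun i => measure_ne_top μ _), hCrow j]
  · exact hK2C
  · rfl

end
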